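/- Let X be a complex Banach space, let A be a closed linear operator in X (a linear map defined on a subspace D(A) ⊆ X whose graph is closed in X × X), and let R : (0,∞) → L(X) be strongly continuous with ∫₀^∞ ‖R(t)‖ dt < ∞ and such that for every t > 0 and x ∈ D(A): R(t)x ∈ D(A) and A R(t)x = R(t)Ax. Let f : ℝ → X be bounded and continuous with f(s) ∈ D(A) for all s ∈ ℝ and with s ↦ Af(s) bounded. Suppose there exists a sequence (τ_k) of real numbers with |τ_k| → +∞ such that f(·+τ_k) → Af(·) uniformly on compact subsets of ℝ. Then the function F(t) := ∫_{−∞}^t R(t−s) f(s) ds = ∫₀^∞ R(s) f(t−s) ds is well defined, bounded and continuous, F(t) ∈ D(A) with AF(t) = ∫₀^∞ R(s) Af(t−s) ds for all t ∈ ℝ, and F(·+τ_k) → AF(·) uniformly on compact subsets of ℝ. -/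

import Mathlib

open MeasureTheory Filter Topology

section helpers

variable {X : Type*} [NormedAddCommGroup X] [NormedSpace ℂ X] [CompleteSpace X]

lemma stmt4_locBound (R : ℝ → X →L[ℂ] X)
    (hRsc : ∀ x : X, ContinuousOn (fun t => R t x) (Set.Ioi 0))
    {s₀ : ℝ} (hs₀ : 0 < s₀) :
    ∃ M, ∀ s ∈ Set.Icc (s₀/2) (s₀+1), ‖R s‖ ≤ M := by
  have hsub : Set.Icc (s₀/2) (s₀+1) ⊆ Set.Ioi 0 := fun s hs => lt_of_lt_of_le (by linarith) hs.1
  have hb : ∀ x : X, ∃ C, ∀ i : Set.Icc (s₀/2) (s₀+1), ‖R i x‖ ≤ C := by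
    intro x
    obtain ⟨C, hC⟩ := isCompact_Icc.exists_bound_of_continuousOn ((hRsc x).mono hsub)
    exact ⟨C, fun i => hC i i.2⟩
  obtain ⟨M, hM⟩ := banach_steinhaus (g := fun i : Set.Icc (s₀/2) (s₀+1) => R i) hb
  exact ⟨M, fun s hs => hM ⟨s, hs⟩⟩

lemma stmt4_contApply (R : ℝ → X →L[ℂ] X)
    (hRsc : ∀ x : X, ContinuousOn (fun t => R t x) (Set.Ioi 0))
    {g : ℝ → X} (hg : Continuous g) :
    ContinuousOn (fun s => R s (g s)) (Set.Ioi 0) := by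
  intro s₀ hs₀
  have hs₀' : 0 < s₀ := hs₀
  obtain ⟨M, hM⟩ := stmt4_locBound R hRsc hs₀'
  have hmem : Set.Icc (s₀/2) (s₀+1) ∈ 𝓝[Set.Ioi 0] s₀ :=
    nhdsWithin_le_nhds (Icc_mem_nhds (by linarith) (by linarith))
  have h2 : Tendsto (fun s => R s (g s) - R s (g s₀)) (𝓝[Set.Ioi 0] s₀) (𝓝 0) := by
    apply squeeze_zero_norm' (a := fun s => M * ‖g s - g s₀‖)
    · filter_upwards [hmem] with s hs
      calc ‖R s (g s) - R s (g s₀)‖ = ‖R s (g s - g s₀)‖ := by rw [map_sub]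
        _ ≤ ‖R s‖ * ‖g s - g s₀‖ := (R s).le_opNorm _
        _ ≤ M * ‖g s - g s₀‖ := mul_le_mul_of_nonneg_right (hM s hs) (norm_nonneg _)
    · have : Tendsto (fun s => M * ‖g s - g s₀‖) (𝓝 s₀) (𝓝 (M * ‖g s₀ - g s₀‖)) :=
        tendsto_const_nhds.mul ((hg.sub continuous_const).norm.tendsto s₀)
      simpa using this.mono_left nhdsWithin_le_nhds
  have h1 : Tendsto (fun s => R s (g s₀)) (𝓝[Set.Ioi 0] s₀) (𝓝 (R s₀ (g s₀))) := hRsc (g s₀) s₀ hs₀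
  have := h2.add h1
  simpa [ContinuousWithinAt] using this

lemma stmt4_intApply (R : ℝ → X →L[ℂ] X)
    (hRsc : ∀ x : X, ContinuousOn (fun t => R t x) (Set.Ioi 0))
    (hRint : IntegrableOn (fun t => ‖R t‖) (Set.Ioi 0))
    {g : ℝ → X} (hg : Continuous g) {C : ℝ} (hC : ∀ s, ‖g s‖ ≤ C) :
    IntegrableOn (fun s => R s (g s)) (Set.Ioi 0) := by
  refine (hRint.mul_const C).mono'
    ((stmt4_contApply R hRsc hg).aestronglyMeasurable measurableSet_Ioi) ?_
  refine Eventually.of_forall fun s => ?_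
  calc ‖R s (g s)‖ ≤ ‖R s‖ * ‖g s‖ := (R s).le_opNorm _
    _ ≤ ‖R s‖ * C := mul_le_mul_of_nonneg_left (hC s) (norm_nonneg _)

omit [CompleteSpace X] in
lemma stmt4_normIntApply (R : ℝ → X →L[ℂ] X)
    (hRint : IntegrableOn (fun t => ‖R t‖) (Set.Ioi 0))
    {g : ℝ → X} {C : ℝ} (hC : ∀ s, ‖g s‖ ≤ C) :
    ‖∫ s in Set.Ioi (0:ℝ), R s (g s)‖ ≤ (∫ s in Set.Ioi (0:ℝ), ‖R s‖) * C := by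
  rw [← integral_mul_const]
  refine norm_integral_le_of_norm_le (hRint.mul_const C) (Eventually.of_forall fun s => ?_)
  calc ‖R s (g s)‖ ≤ ‖R s‖ * ‖g s‖ := (R s).le_opNorm _
    _ ≤ ‖R s‖ * C := mul_le_mul_of_nonneg_left (hC s) (norm_nonneg _)

lemma stmt4_tailSmall {h : ℝ → ℝ} (hint : IntegrableOn h (Set.Ioi 0))
    {δ : ℝ} (hδ : 0 < δ) :
    ∃ T : ℕ, ∫ s in Set.Ioi (T:ℝ), h s < δ := by
  have hU : ⋃ n : ℕ, Set.Ioc (0:ℝ) n = Set.Ioi 0 := by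
    ext x
    simp only [Set.mem_iUnion, Set.mem_Ioc, Set.mem_Ioi]
    constructor
    · rintro ⟨n, h1, _⟩; exact h1
    · intro hx
      obtain ⟨n, hn⟩ := exists_nat_gt x
      exact ⟨n, hx, hn.le⟩
  have hten : Tendsto (fun n : ℕ => ∫ s in Set.Ioc (0:ℝ) n, h s) atTop
      (𝓝 (∫ s in Set.Ioi (0:ℝ), h s)) := by
    have := tendsto_setIntegral_of_monotone (s := fun n : ℕ => Set.Ioc (0:ℝ) n)
      (fun _ => measurableSet_Ioc)
      (fun m n hmn => Set.Ioc_subset_Ioc le_rfl (by exact_mod_cast hmn))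
      (by rw [hU]; exact hint)
    rwa [hU] at this
  obtain ⟨n, hn⟩ := (Metric.tendsto_nhds.mp hten δ hδ).exists
  have hsplit : ∫ s in Set.Ioi (0:ℝ), h s
      = (∫ s in Set.Ioc (0:ℝ) n, h s) + ∫ s in Set.Ioi (n:ℝ), h s := by
    rw [← setIntegral_union (Set.Ioc_disjoint_Ioi le_rfl) measurableSet_Ioi
      (hint.mono_set Set.Ioc_subset_Ioi_self)
      (hint.mono_set (Set.Ioi_subset_Ioi (Nat.cast_nonneg n))),
      Set.Ioc_union_Ioi_eq_Ioi (Nat.cast_nonneg n)]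
  rw [Real.dist_eq] at hn
  have := abs_lt.mp hn
  exact ⟨n, by linarith⟩

end helpers

/-- Invariance of the Bebutov-type uniform recurrence (with respect to the binary
relation given by a closed linear operator `A`) under the infinite convolution product
`F(t) = ∫_{-∞}^t R(t−s) f(s) ds = ∫_0^∞ R(s) f(t−s) ds`. -/
theorem stmt4 {X : Type*} [NormedAddCommGroup X] [NormedSpace ℂ X] [CompleteSpace X]
    (A : X →ₗ.[ℂ] X) (hA : IsClosed (A.graph : Set (X × X)))
    (R : ℝ → X →L[ℂ] X)
    (hRsc : ∀ x : X, ContinuousOn (fun t => R t x) (Set.Ioi 0))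
    (hRint : IntegrableOn (fun t => ‖R t‖) (Set.Ioi 0))
    (hRA : ∀ t ∈ Set.Ioi (0 : ℝ), ∀ x y : X, (x, y) ∈ A.graph → (R t x, R t y) ∈ A.graph)
    (f Af : ℝ → X) (hfc : Continuous f) (hfb : ∃ C, ∀ s, ‖f s‖ ≤ C)
    (hgraph : ∀ s, (f s, Af s) ∈ A.graph) (hAfb : ∃ C, ∀ s, ‖Af s‖ ≤ C)
    (τ : ℕ → ℝ) (hτ : Tendsto (fun k => |τ k|) atTop atTop)
    (hrec : ∀ K : Set ℝ, IsCompact K →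
      TendstoUniformlyOn (fun k t => f (t + τ k)) Af atTop K) :
    (∀ t : ℝ, IntegrableOn (fun s => R s (f (t - s))) (Set.Ioi 0)) ∧
    Continuous (fun t => ∫ s in Set.Ioi (0 : ℝ), R s (f (t - s))) ∧
    (∃ C, ∀ t, ‖∫ s in Set.Ioi (0 : ℝ), R s (f (t - s))‖ ≤ C) ∧
    (∀ t : ℝ, ((∫ s in Set.Ioi (0 : ℝ), R s (f (t - s))),
        ∫ s in Set.Ioi (0 : ℝ), R s (Af (t - s))) ∈ A.graph) ∧
    (∀ K : Set ℝ, IsCompact K →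
      TendstoUniformlyOn (fun k t => ∫ s in Set.Ioi (0 : ℝ), R s (f (t + τ k - s)))
        (fun t => ∫ s in Set.Ioi (0 : ℝ), R s (Af (t - s))) atTop K) := by
  obtain ⟨C, hC⟩ := hfb
  obtain ⟨C', hC'⟩ := hAfb
  have hC0 : 0 ≤ C := le_trans (norm_nonneg _) (hC 0)
  have hC'0 : 0 ≤ C' := le_trans (norm_nonneg _) (hC' 0)
  -- continuity of Af
  have hAfc : Continuous Af := by
    rw [continuous_iff_continuousAt]
    intro t
    have h := (hrec (Set.Icc (t-1) (t+1)) isCompact_Icc).continuousOn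
      (Frequently.of_forall fun k => (hfc.comp (continuous_id.add continuous_const)).continuousOn)
    exact h.continuousAt (Icc_mem_nhds (by linarith) (by linarith))
  set I := ∫ s in Set.Ioi (0:ℝ), ‖R s‖ with hIdef
  have hI0 : 0 ≤ I := setIntegral_nonneg measurableSet_Ioi fun s _ => norm_nonneg _
  have hint1 : ∀ t : ℝ, IntegrableOn (fun s => R s (f (t - s))) (Set.Ioi 0) := fun t =>
    stmt4_intApply R hRsc hRint (hfc.comp (continuous_const.sub continuous_id))
      (fun s => hC (t - s))
  have hint2 : ∀ t : ℝ, IntegrableOn (fun s => R s (Af (t - s))) (Set.Ioi 0) := fun t =>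
    stmt4_intApply R hRsc hRint (hAfc.comp (continuous_const.sub continuous_id))
      (fun s => hC' (t - s))
  refine ⟨hint1, ?_, ?_, ?_, ?_⟩
  · -- continuity of F
    rw [continuous_iff_continuousAt]
    intro t₀
    apply continuousAt_of_dominated (bound := fun s => ‖R s‖ * C)
    · exact Eventually.of_forall fun t => (hint1 t).aestronglyMeasurable
    · refine Eventually.of_forall fun t => Eventually.of_forall fun s => ?_
      calc ‖R s (f (t - s))‖ ≤ ‖R s‖ * ‖f (t - s)‖ := (R s).le_opNorm _
        _ ≤ ‖R s‖ * C := mul_le_mul_of_nonneg_left (hC _) (norm_nonneg _)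
    · exact hRint.mul_const C
    · exact Eventually.of_forall fun s =>
        ((R s).continuous.comp (hfc.comp (continuous_id.sub continuous_const))).continuousAt
  · -- boundedness
    exact ⟨I * C, fun t => stmt4_normIntApply R hRint (fun s => hC (t - s))⟩
  · -- graph membership
    intro t
    haveI : CompleteSpace A.graph := hA.completeSpace_coe
    have hmemS : ∀ s ∈ Set.Ioi (0:ℝ), (R s (f (t - s)), R s (Af (t - s))) ∈ A.graph :=
      fun s hs => hRA s hs _ _ (hgraph (t - s))
    set G : ℝ → A.graph := fun s =>
      if h : s ∈ Set.Ioi (0:ℝ) then ⟨_, hmemS s h⟩ else 0 with hGdef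
    have hGae : (fun s => ((G s : X × X)))
        =ᵐ[volume.restrict (Set.Ioi 0)]
        (fun s => (R s (f (t - s)), R s (Af (t - s)))) := by
      filter_upwards [ae_restrict_mem measurableSet_Ioi] with s hs
      simp only [hGdef]
      rw [dif_pos hs]
    have hpair : IntegrableOn (fun s => (R s (f (t - s)), R s (Af (t - s)))) (Set.Ioi 0) :=
      (hint1 t).prodMk (hint2 t)
    have hGint : IntegrableOn G (Set.Ioi 0) := by
      constructor
      · rw [← Topology.IsEmbedding.subtypeVal.aestronglyMeasurable_comp_iff]
        exact hpair.aestronglyMeasurable.congr hGae.symm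
      · refine (hasFiniteIntegral_congr'
          (g := fun s => (R s (f (t - s)), R s (Af (t - s))))
          (hGae.mono fun s hs => by beta_reduce at hs; rw [← hs]; rfl)).mpr hpair.hasFiniteIntegral
    have hval : ∫ s in Set.Ioi (0:ℝ), ((G s : X × X))
        = ((∫ s in Set.Ioi (0:ℝ), G s : A.graph) : X × X) := by
      simpa using A.graph.subtypeL.integral_comp_comm hGint
    have key : ((∫ s in Set.Ioi (0:ℝ), R s (f (t - s))),
        (∫ s in Set.Ioi (0:ℝ), R s (Af (t - s))))
        = ((∫ s in Set.Ioi (0:ℝ), G s : A.graph) : X × X) := by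
      rw [← integral_pair (hint1 t) (hint2 t), ← hval]
      exact (integral_congr_ae hGae).symm
    rw [key]
    exact (∫ s in Set.Ioi (0:ℝ), G s : A.graph).2
  · -- uniform convergence
    intro K hK
    rw [Metric.tendstoUniformlyOn_iff]
    intro ε hε
    set D := C + C' + 1 with hD
    have hD0 : 0 < D := by linarith
    obtain ⟨T, hT⟩ := stmt4_tailSmall hRint (show (0:ℝ) < ε/(4*D) by positivity)
    set K' := (fun p : ℝ × ℝ => p.1 - p.2) '' (K ×ˢ Set.Icc (0:ℝ) T) with hK'def
    have hK'c : IsCompact K' := (hK.prod isCompact_Icc).image (continuous_fst.sub continuous_snd)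
    have hrec' := hrec K' hK'c
    rw [Metric.tendstoUniformlyOn_iff] at hrec'
    have hε'' : (0:ℝ) < ε/(4*(I+1)) := by positivity
    filter_upwards [hrec' _ hε''] with k hk
    intro t ht
    set u : ℝ → X := fun s => R s (Af (t - s)) - R s (f (t + τ k - s)) with hu
    have hint3 : IntegrableOn (fun s => R s (f (t + τ k - s))) (Set.Ioi 0) := hint1 (t + τ k)
    have hintu : IntegrableOn u (Set.Ioi 0) := (hint2 t).sub hint3
    rw [dist_eq_norm, ← integral_sub (hint2 t) hint3]
    have hsplit : ∫ s in Set.Ioi (0:ℝ), u s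
        = (∫ s in Set.Ioc (0:ℝ) T, u s) + ∫ s in Set.Ioi (T:ℝ), u s := by
      rw [← setIntegral_union (Set.Ioc_disjoint_Ioi le_rfl) measurableSet_Ioi
        (hintu.mono_set Set.Ioc_subset_Ioi_self)
        (hintu.mono_set (Set.Ioi_subset_Ioi (Nat.cast_nonneg T))),
        Set.Ioc_union_Ioi_eq_Ioi (Nat.cast_nonneg T)]
    have h1 : ‖∫ s in Set.Ioc (0:ℝ) T, u s‖
        ≤ (∫ s in Set.Ioc (0:ℝ) T, ‖R s‖) * (ε/(4*(I+1))) := by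
      rw [← integral_mul_const]
      refine norm_integral_le_of_norm_le
        ((hRint.mono_set Set.Ioc_subset_Ioi_self).mul_const _) ?_
      filter_upwards [ae_restrict_mem measurableSet_Ioc] with s hs
      have hmem : t - s ∈ K' := ⟨(t, s), ⟨ht, ⟨hs.1.le, hs.2⟩⟩, rfl⟩
      have hb := hk _ hmem
      rw [dist_eq_norm] at hb
      calc ‖u s‖ = ‖R s (Af (t - s) - f ((t - s) + τ k))‖ := by
            rw [hu]
            simp only [← map_sub]
            rw [show t + τ k - s = (t - s) + τ k from by ring]
        _ ≤ ‖R s‖ * ‖Af (t - s) - f ((t - s) + τ k)‖ := (R s).le_opNorm _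
        _ ≤ ‖R s‖ * (ε/(4*(I+1))) := mul_le_mul_of_nonneg_left hb.le (norm_nonneg _)
    have h1' : (∫ s in Set.Ioc (0:ℝ) T, ‖R s‖) ≤ I :=
      setIntegral_mono_set hRint (Eventually.of_forall fun s => norm_nonneg _)
        (HasSubset.Subset.eventuallyLE Set.Ioc_subset_Ioi_self)
    have h2 : ‖∫ s in Set.Ioi (T:ℝ), u s‖ ≤ (∫ s in Set.Ioi (T:ℝ), ‖R s‖) * D := by
      rw [← integral_mul_const]
      refine norm_integral_le_of_norm_le
        ((hRint.mono_set (Set.Ioi_subset_Ioi (Nat.cast_nonneg T))).mul_const _) ?_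
      refine Eventually.of_forall fun s => ?_
      calc ‖u s‖ = ‖R s (Af (t - s) - f (t + τ k - s))‖ := by rw [hu]; simp only [← map_sub]
        _ ≤ ‖R s‖ * ‖Af (t - s) - f (t + τ k - s)‖ := (R s).le_opNorm _
        _ ≤ ‖R s‖ * D := by
            refine mul_le_mul_of_nonneg_left ?_ (norm_nonneg _)
            calc ‖Af (t - s) - f (t + τ k - s)‖ ≤ ‖Af (t - s)‖ + ‖f (t + τ k - s)‖ :=
                  norm_sub_le _ _
              _ ≤ C' + C := add_le_add (hC' _) (hC _)
              _ ≤ D := by linarith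
    have hIocpos : 0 ≤ ∫ s in Set.Ioc (0:ℝ) T, ‖R s‖ :=
      setIntegral_nonneg measurableSet_Ioc fun _ _ => norm_nonneg _
    have e1 : (∫ s in Set.Ioc (0:ℝ) T, ‖R s‖) * (ε/(4*(I+1))) < ε/4 := by
      have hlt : (∫ s in Set.Ioc (0:ℝ) T, ‖R s‖) < I + 1 := by linarith
      have := mul_lt_mul_of_pos_right hlt hε''
      have heq : (I+1) * (ε/(4*(I+1))) = ε/4 := by
        field_simp
      linarith
    have e2 : (∫ s in Set.Ioi (T:ℝ), ‖R s‖) * D < ε/4 := by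
      have := mul_lt_mul_of_pos_right hT hD0
      have heq : (ε/(4*D)) * D = ε/4 := by field_simp
      linarith
    calc ‖∫ s in Set.Ioi (0:ℝ), u s‖
        ≤ ‖∫ s in Set.Ioc (0:ℝ) T, u s‖ + ‖∫ s in Set.Ioi (T:ℝ), u s‖ := by
          rw [hsplit]; exact norm_add_le _ _
      _ < ε := by
          have q1 := lt_of_le_of_lt h1 e1
          have q2 := lt_of_le_of_lt h2 e2
          linarith
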